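/- Let Σ = {s_ijk} be a (01)-multiplier system over R whose principal multiplier matrix is in canonical form with blocks B₁,…,B_k (so s_iji = 1 iff i,j lie in the same block), and suppose Σ is of the form K₀. Then the map sending a matrix A ∈ M(n,R,Σ) to the tuple of its diagonal-block submatrices (A|_{B₁×B₁}, …, A|_{B_k×B_k}) is a surjective ring homomorphism M(n,R,Σ) → M(n₁,R) × … × M(n_k,R) whose kernel consists of the matrices vanishing on all diagonal blocks, and this kernel is a nilpotent ideal. -/

import Mathlib

/-- Iterated product of `m + 1` elements with respect to a binary operation. -/
def iterProd {α : Type*} (f : α → α → α) : (m : ℕ) → (Fin (m + 1) → α) → α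
  | 0, A => A 0
  | m + 1, A => f (A 0) (iterProd f m fun l => A l.succ)

/-- For a (01)-multiplier system of the form `K₀` whose principal
multiplier matrix is in canonical form with blocks `B₁, …, B_k` (fibers of `b`),
the map sending a matrix to the tuple of its diagonal-block submatrices is a
surjective ring homomorphism onto the product of the full matrix rings over the
blocks; its kernel is the set of matrices vanishing on all diagonal blocks, and
this kernel is a nilpotent ideal. -/
theorem K0_canonical_block_projection {R : Type*} [Ring R] [Nontrivial R]
    (n k : ℕ) (b : Fin n → Fin k)
    (s : Fin n → Fin n → Fin n → R)
    (hcent : ∀ i j k' (r : R), s i j k' * r = r * s i j k')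
    (h1 : ∀ i k', s i i k' = 1) (h2 : ∀ i k', s i k' k' = 1)
    (hmul : ∀ i j k' l, s i j k' * s i k' l = s i j l * s j k' l)
    (h01 : ∀ i j k', s i j k' = 0 ∨ s i j k' = 1)
    (hK0 : ∀ i j k' : Fin n, i ≠ j → j ≠ k' → i ≠ k' →
      s i j i = 0 → s j k' j = 0 → s i j k' = 0)
    (hcanon : ∀ i j, s i j i = 1 ↔ b i = b j)
    (fmul : Matrix (Fin n) (Fin n) R → Matrix (Fin n) (Fin n) R → Matrix (Fin n) (Fin n) R)
    (hfmul : ∀ A B i j, fmul A B i j = ∑ k', s i k' j * A i k' * B k' j)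
    (φ : Matrix (Fin n) (Fin n) R → ∀ t : Fin k, Matrix {i // b i = t} {i // b i = t} R)
    (hφ : ∀ A t p q, φ A t p q = A p.1 q.1) :
    Function.Surjective φ ∧
    (∀ A B, φ (A + B) = φ A + φ B) ∧
    φ 1 = 1 ∧
    (∀ A B t, φ (fmul A B) t = φ A t * φ B t) ∧
    (∀ A, φ A = 0 ↔ ∀ i j, b i = b j → A i j = 0) ∧
    (∃ m : ℕ, ∀ A : Fin (m + 1) → Matrix (Fin n) (Fin n) R,
      (∀ l i j, b i = b j → A l i j = 0) → iterProd fmul m A = 0) := by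
  -- s i j i = 0 for i, j in different blocks
  have hzero : ∀ i j : Fin n, b i ≠ b j → s i j i = 0 := by
    intro i j hij
    rcases h01 i j i with h | h
    · exact h
    · exact absurd ((hcanon i j).mp h) hij
  -- s i j l = 1 when i, j, l all lie in the same block
  have hone : ∀ i j l : Fin n, b i = b j → b j = b l → s i j l = 1 := by
    intro i j l hij hjl
    rcases h01 i j l with h | h
    · exfalso
      have hm := hmul i j l j
      rw [h, zero_mul, h2 i j, (hcanon j l).mpr hjl, mul_one] at hm
      exact one_ne_zero hm.symm
    · exact h
  -- s i j l = 0 when b i ≠ b j and b j ≠ b l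
  have hs0 : ∀ i j l : Fin n, b i ≠ b j → b j ≠ b l → s i j l = 0 := by
    intro i j l h₁ h₂
    have hij : i ≠ j := fun h => h₁ (h ▸ rfl)
    have hjl : j ≠ l := fun h => h₂ (h ▸ rfl)
    by_cases hil : i = l
    · subst hil; exact hzero i j h₁
    · exact hK0 i j l hij hjl hil (hzero i j h₁) (hzero j l h₂)
  -- product of two kernel elements vanishes
  have key : ∀ (A B : Matrix (Fin n) (Fin n) R),
      (∀ i j, b i = b j → A i j = 0) → (∀ i j, b i = b j → B i j = 0) →
      fmul A B = 0 := by
    intro A B hA hB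
    ext i j
    rw [hfmul]
    simp only [Matrix.zero_apply]
    apply Finset.sum_eq_zero
    intro k' _
    by_cases h₁ : b i = b k'
    · rw [hA i k' h₁, mul_zero, zero_mul]
    by_cases h₂ : b k' = b j
    · rw [hB k' j h₂, mul_zero]
    rw [hs0 i k' j h₁ h₂, zero_mul, zero_mul]
  refine ⟨?_, ?_, ?_, ?_, ?_, ?_⟩
  · -- surjectivity
    intro M
    refine ⟨fun i j => if h : b j = b i then M (b i) ⟨i, rfl⟩ ⟨j, h⟩ else 0, ?_⟩
    funext t
    ext p q
    refine (hφ _ _ _ _).trans ?_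
    obtain ⟨p, hp⟩ := p
    obtain ⟨q, hq⟩ := q
    subst hp
    simp only [dif_pos hq]
  · -- additivity
    intro A B
    funext t
    ext p q
    simp [hφ, Matrix.add_apply]
  · -- unit
    funext t
    ext p q
    rw [hφ]
    simp [Matrix.one_apply, Subtype.ext_iff]
  · -- multiplicativity
    intro A B t
    ext p q
    rw [hφ, hfmul, Matrix.mul_apply]
    rw [Finset.sum_congr rfl (fun k' _ => by rw [hφ, hφ] :
      ∀ k' ∈ Finset.univ, φ A t p k' * φ B t k' q = A p.1 k'.1 * B k'.1 q.1)]
    rw [← Finset.sum_subtype (Finset.univ.filter (fun i => b i = t)) (by simp)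
      (fun k' => A p.1 k' * B k' q.1)]
    rw [Finset.sum_filter]
    apply Finset.sum_congr rfl
    intro k' _
    by_cases h : b k' = t
    · rw [if_pos h, hone p.1 k' q.1 (p.2.trans h.symm) (h.trans q.2.symm), one_mul]
    · rw [if_neg h]
      have h₁ : b p.1 ≠ b k' := fun e => h (e ▸ p.2)
      have h₂ : b k' ≠ b q.1 := fun e => h (e.trans q.2)
      rw [hs0 p.1 k' q.1 h₁ h₂, zero_mul, zero_mul]
  · -- kernel
    intro A
    constructor
    · intro h i j hij
      have h' := hφ A (b i) ⟨i, rfl⟩ ⟨j, hij.symm⟩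
      rw [h] at h'
      simpa using h'.symm
    · intro h
      funext t
      ext p q
      rw [hφ]
      exact h p.1 q.1 (p.2.trans q.2.symm)
  · -- nilpotency
    refine ⟨1, fun A hA => ?_⟩
    show fmul (A 0) _ = 0
    exact key (A 0) _ (hA 0) (hA _)
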